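/- For the parent-time function ρ(t) = t - 2^{δ(t)} with δ(t) the 2-adic valuation of t, define cut(t) = {s ∈ {1,...,T} : ρ(s) < t ≤ s}. Then for every t ∈ {1,...,T}, |cut(t)| ≤ log₂(T) + 1. -/

import Mathlib

/-- The parent-time function ρ(t) = t - 2^(δ(t)), where δ(t) is the 2-adic valuation. -/
def parentTime (t : ℕ) : ℕ := t - 2 ^ (padicValNat 2 t)

/-- cut(t) = {s ∈ {1,...,T} : ρ(s) < t ≤ s}. -/
def cut (T t : ℕ) : Finset ℕ :=
  (Finset.Icc 1 T).filter (fun s => parentTime s < t ∧ t ≤ s)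

lemma cut_mem {T t s : ℕ} (hs : s ∈ cut T t) :
    1 ≤ s ∧ s ≤ T ∧ s - 2 ^ (padicValNat 2 s) < t ∧ t ≤ s := by
  simp only [cut, Finset.mem_filter, Finset.mem_Icc, parentTime] at hs
  exact ⟨(Finset.mem_Icc.mp (Finset.mem_filter.mp hs).1).1, (Finset.mem_Icc.mp (Finset.mem_filter.mp hs).1).2, (Finset.mem_filter.mp hs).2⟩

lemma cut_val_injOn (T t : ℕ) :
    Set.InjOn (fun s => padicValNat 2 s) (cut T t : Set ℕ) := by
  have key : ∀ s1 s2, s1 ∈ cut T t → s2 ∈ cut T t → s1 ≤ s2 →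
      padicValNat 2 s1 = padicValNat 2 s2 → s1 = s2 := by
    intro s1 s2 h1 h2 hle hv
    obtain ⟨h11, _, _, h14⟩ := cut_mem h1
    obtain ⟨h21, _, h23, _⟩ := cut_mem h2
    set v := padicValNat 2 s1 with hvdef
    have d1 : 2 ^ v ∣ s1 := pow_padicValNat_dvd
    have d2 : 2 ^ v ∣ s2 := hv ▸ pow_padicValNat_dvd (p := 2) (n := s2)
    have hdvd : 2 ^ v ∣ s2 - s1 := Nat.dvd_sub d2 d1
    have hlt : s2 - s1 < 2 ^ v := by
      have : s2 - 2 ^ v < s1 := lt_of_lt_of_le (hv ▸ h23) h14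
      omega
    have := Nat.eq_zero_of_dvd_of_lt hdvd
    rcases Nat.eq_zero_or_pos (s2 - s1) with h0 | hpos
    · omega
    · exact absurd hlt (not_lt.mpr (Nat.le_of_dvd hpos hdvd))
  intro s1 hs1 s2 hs2 hv
  rcases le_total s1 s2 with h | h
  · exact key s1 s2 hs1 hs2 h hv
  · exact (key s2 s1 hs2 hs1 h hv.symm).symm

lemma cut_card_le_nat (T : ℕ) (hT : 0 < T) (t : ℕ) :
    (cut T t).card ≤ Nat.log 2 T + 1 := by
  have hmaps : ∀ s ∈ cut T t, padicValNat 2 s ∈ Finset.range (Nat.log 2 T + 1) := by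
    intro s hs
    obtain ⟨h1, h2, _, _⟩ := cut_mem hs
    have hd : 2 ^ (padicValNat 2 s) ∣ s := pow_padicValNat_dvd
    have hle : 2 ^ (padicValNat 2 s) ≤ s := Nat.le_of_dvd (by omega) hd
    have : 2 ^ (padicValNat 2 s) ≤ T := le_trans hle h2
    rw [Finset.mem_range, Nat.lt_succ_iff]
    exact (Nat.le_log_iff_pow_le one_lt_two (by omega)).mpr this
  calc (cut T t).card ≤ (Finset.range (Nat.log 2 T + 1)).card :=
        Finset.card_le_card_of_injOn _ hmaps (cut_val_injOn T t)
    _ = Nat.log 2 T + 1 := Finset.card_range _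

theorem cut_card_le (T : ℕ) (hT : 0 < T) (t : ℕ) (ht1 : 1 ≤ t) (htT : t ≤ T) :
    ((cut T t).card : ℝ) ≤ Real.logb 2 T + 1 := by
  have h1 : ((cut T t).card : ℝ) ≤ (Nat.log 2 T : ℝ) + 1 := by
    have := cut_card_le_nat T hT t
    exact_mod_cast this
  have h2 : (Nat.log 2 T : ℝ) ≤ Real.logb 2 T := Real.natLog_le_logb T 2
  linarith
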